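/- For all non-negative integers m and n with 0 ≤ m ≤ 2^n - 1, we have a(m+1)·a(2^n - m) - a(m)·a(2^n - (m+1)) = 1, where a is Stern's diatomic sequence. -/

import Mathlib

/-- Stern's diatomic sequence: a(0)=0, a(1)=1, a(2m)=a(m), a(2m+1)=a(m)+a(m+1). -/
def stern : ℕ → ℕ
  | 0 => 0
  | 1 => 1
  | n + 2 =>
    if _h : n % 2 = 0 then stern (n / 2 + 1)
    else stern (n / 2 + 1) + stern (n / 2 + 2)
decreasing_by
  · omega
  · omega
  · omega

lemma stern_two_mul (k : ℕ) : stern (2 * k) = stern k := by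
  match k with
  | 0 => rfl
  | k + 1 =>
    rw [show 2 * (k + 1) = 2 * k + 2 by ring]
    rw [stern]
    simp [Nat.mul_div_cancel_left]

lemma stern_two_mul_add_one (k : ℕ) : stern (2 * k + 1) = stern k + stern (k + 1) := by
  match k with
  | 0 => simp [stern]
  | k + 1 =>
    rw [show 2 * (k + 1) + 1 = (2 * k + 1) + 2 by ring]
    rw [stern]
    have h : (2 * k + 1) % 2 = 1 := by omega
    simp [h]
    have : (2 * k + 1) / 2 = k := by omega
    rw [this]

lemma stern_key (n : ℕ) : ∀ m ≤ 2 ^ n - 1,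
    (stern (m + 1) : ℤ) * stern (2 ^ n - m) - stern m * stern (2 ^ n - (m + 1)) = 1 := by
  induction n with
  | zero =>
    intro m hm
    interval_cases m
    simp [stern]
  | succ n ih =>
    intro m hm
    have h2 : 0 < 2 ^ n := Nat.pow_pos (by norm_num)
    have hp : 2 ^ (n + 1) = 2 ^ n + 2 ^ n := by rw [pow_succ]; ring
    rcases Nat.even_or_odd m with ⟨k, hk⟩ | ⟨k, hk⟩
    · subst hk
      have hk2 : k ≤ 2 ^ n - 1 := by omega
      have e1 : k + k + 1 = 2 * k + 1 := by ring
      have e2 : 2 ^ (n + 1) - (k + k) = 2 * (2 ^ n - k) := by omega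
      have e3 : k + k = 2 * k := by ring
      have e4 : 2 ^ (n + 1) - (2 * k + 1) = 2 * (2 ^ n - k - 1) + 1 := by omega
      rw [e1, e2, e3, e4, stern_two_mul, stern_two_mul, stern_two_mul_add_one,
        stern_two_mul_add_one]
      have e5 : 2 ^ n - k - 1 + 1 = 2 ^ n - k := by omega
      rw [e5]
      have := ih k hk2
      have e6 : 2 ^ n - (k + 1) = 2 ^ n - k - 1 := by omega
      rw [e6] at this
      push_cast at this ⊢
      linarith [this]
    · subst hk
      have hk2 : k ≤ 2 ^ n - 1 := by omega
      have e1 : 2 * k + 1 + 1 = 2 * (k + 1) := by ring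
      have e2 : 2 ^ (n + 1) - (2 * k + 1) = 2 * (2 ^ n - k - 1) + 1 := by omega
      have e4 : 2 ^ (n + 1) - 2 * (k + 1) = 2 * (2 ^ n - k - 1) := by omega
      rw [e1, e2, e4, stern_two_mul, stern_two_mul, stern_two_mul_add_one,
        stern_two_mul_add_one]
      have e5 : 2 ^ n - k - 1 + 1 = 2 ^ n - k := by omega
      rw [e5]
      have := ih k hk2
      have e6 : 2 ^ n - (k + 1) = 2 ^ n - k - 1 := by omega
      rw [e6] at this
      push_cast at this ⊢
      linarith [this]

theorem stern_det_one (m n : ℕ) (h : m ≤ 2 ^ n - 1) :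
    stern (m + 1) * stern (2 ^ n - m) - stern m * stern (2 ^ n - (m + 1)) = 1 := by
  have := stern_key n m h
  omega
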